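/- Fix n ≥ 1, r > 0, and nonnegative integers α₁,…,α_n, and let P(x) = x₁^{α₁} x₂^{α₂} ⋯ x_n^{α_n}. Set β_i = (α_i+1)/2. Then the Lebesgue integral of P over the closed Euclidean ball B_n(0;r) = {x ∈ ℝⁿ : ‖x‖ ≤ r} equals 0 if some α_i is odd, and equals (r^{α₁+⋯+α_n+n} / (α₁+⋯+α_n+n)) · 2 Γ(β₁)Γ(β₂)⋯Γ(β_n) / Γ(β₁+β₂+⋯+β_n) if every α_i is even. -/

import Mathlib

open scoped BigOperators Classical

open MeasureTheory Measure Metric Set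

private noncomputable def sphMono (n : ℕ) (α : Fin n → ℕ) : ℝ :=
  ∫ y : sphere (0 : EuclideanSpace ℝ (Fin n)) 1,
    ∏ i, (y : EuclideanSpace ℝ (Fin n)) i ^ α i
    ∂((volume : Measure (EuclideanSpace ℝ (Fin n))).toSphere)

private lemma nontrivial_euclidean (n : ℕ) (hn : 1 ≤ n) :
    Nontrivial (EuclideanSpace ℝ (Fin n)) := by
  refine ⟨⟨0, EuclideanSpace.single ⟨0, hn⟩ 1, fun h => ?_⟩⟩
  have := congrArg (fun x : EuclideanSpace ℝ (Fin n) => x ⟨0, hn⟩) h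
  simp [EuclideanSpace.single_apply] at this

private lemma master (n : ℕ) (hn : 1 ≤ n) (α : Fin n → ℕ) (g : ℝ → ℝ) :
    (∫ x : EuclideanSpace ℝ (Fin n), (∏ i, x i ^ α i) * g ‖x‖) =
      sphMono n α * ∫ t in Ioi (0:ℝ), t ^ (n - 1 + ∑ i, α i) * g t := by
  haveI : Nontrivial (EuclideanSpace ℝ (Fin n)) := nontrivial_euclidean n hn
  have hd : Module.finrank ℝ (EuclideanSpace ℝ (Fin n)) = n := by
    simp [finrank_euclideanSpace]
  set S := ∑ i, α i with hS
  calc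
    ∫ x : EuclideanSpace ℝ (Fin n), (∏ i, x i ^ α i) * g ‖x‖
        = ∫ x : ({0}ᶜ : Set (EuclideanSpace ℝ (Fin n))),
            (∏ i, (x : EuclideanSpace ℝ (Fin n)) i ^ α i) *
              g ‖(x : EuclideanSpace ℝ (Fin n))‖ ∂(volume.comap Subtype.val) := by
        rw [integral_subtype_comap (measurableSet_singleton _).compl
            (fun x : EuclideanSpace ℝ (Fin n) => (∏ i, x i ^ α i) * g ‖x‖),
          MeasureTheory.restrict_compl_singleton _]
    _ = ∫ z : sphere (0 : EuclideanSpace ℝ (Fin n)) 1 × Ioi (0:ℝ),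
            (∏ i, (z.1 : EuclideanSpace ℝ (Fin n)) i ^ α i) * ((z.2 : ℝ) ^ S * g z.2)
            ∂(((volume : Measure (EuclideanSpace ℝ (Fin n))).toSphere).prod
              (volumeIoiPow (Module.finrank ℝ (EuclideanSpace ℝ (Fin n)) - 1))) := by
        rw [← (volume : Measure (EuclideanSpace ℝ (Fin n))).measurePreserving_homeomorphUnitSphereProd.integral_comp
            (Homeomorph.measurableEmbedding _)
            (fun z : sphere (0 : EuclideanSpace ℝ (Fin n)) 1 × Ioi (0:ℝ) =>
              (∏ i, (z.1 : EuclideanSpace ℝ (Fin n)) i ^ α i) * ((z.2 : ℝ) ^ S * g z.2))]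
        refine integral_congr_ae (Filter.Eventually.of_forall fun x => ?_)
        have hx : (x : EuclideanSpace ℝ (Fin n)) ≠ 0 := x.2
        have hnorm : ‖(x : EuclideanSpace ℝ (Fin n))‖ ≠ 0 := norm_ne_zero_iff.2 hx
        simp only [homeomorphUnitSphereProd_apply_fst_coe,
          homeomorphUnitSphereProd_apply_snd_coe, PiLp.smul_apply, smul_eq_mul]
        simp_rw [mul_pow]
        rw [Finset.prod_mul_distrib, Finset.prod_pow_eq_pow_sum, ← hS, inv_pow]
        field_simp
    _ = (∫ y : sphere (0 : EuclideanSpace ℝ (Fin n)) 1,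
            ∏ i, (y : EuclideanSpace ℝ (Fin n)) i ^ α i
            ∂((volume : Measure (EuclideanSpace ℝ (Fin n))).toSphere)) *
          ∫ t : Ioi (0:ℝ), ((t : ℝ) ^ S * g t)
            ∂(volumeIoiPow (Module.finrank ℝ (EuclideanSpace ℝ (Fin n)) - 1)) :=
        integral_prod_mul
          (fun y : sphere (0 : EuclideanSpace ℝ (Fin n)) 1 =>
            ∏ i, (y : EuclideanSpace ℝ (Fin n)) i ^ α i)
          (fun t : Ioi (0:ℝ) => (t : ℝ) ^ S * g t)
    _ = sphMono n α * ∫ t in Ioi (0:ℝ), t ^ (n - 1 + S) * g t := by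
        have hfold : sphMono n α = ∫ y : sphere (0 : EuclideanSpace ℝ (Fin n)) 1,
            ∏ i, (y : EuclideanSpace ℝ (Fin n)) i ^ α i
            ∂((volume : Measure (EuclideanSpace ℝ (Fin n))).toSphere) := rfl
        rw [hfold]
        congr 1
        simp only [Measure.volumeIoiPow, ENNReal.ofReal, hd]
        rw [integral_withDensity_eq_integral_smul
            ((measurable_subtype_coe.pow_const _).real_toNNReal)
            (fun t : Ioi (0:ℝ) => (t : ℝ) ^ S * g t),
          integral_subtype_comap measurableSet_Ioi
            (fun a : ℝ => Real.toNNReal (a ^ (n - 1)) • (a ^ S * g a))]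
        refine setIntegral_congr_fun measurableSet_Ioi fun t ht => ?_
        rw [NNReal.smul_def, Real.coe_toNNReal _ (pow_nonneg ht.out.le _), smul_eq_mul,
          pow_add]
        ring

private lemma halfGamma (m : ℕ) :
    (∫ t in Ioi (0:ℝ), t ^ m * Real.exp (-t ^ 2)) =
      (1/2) * Real.Gamma (((m:ℝ) + 1) / 2) := by
  have key := integral_rpow_mul_exp_neg_rpow (p := 2) (q := (m:ℝ)) (by norm_num)
      (lt_of_lt_of_le (by norm_num) (Nat.cast_nonneg m))
  rw [← key]
  refine setIntegral_congr_fun measurableSet_Ioi fun t ht => ?_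
  rw [← Real.rpow_natCast t m]
  congr 1
  rw [← Real.rpow_natCast t 2]
  norm_num

private lemma Jval (a : ℕ) :
    (∫ t : ℝ, t ^ a * Real.exp (-t ^ 2)) =
      if Even a then Real.Gamma (((a:ℝ) + 1) / 2) else 0 := by
  rcases Nat.even_or_odd a with he | ho
  · rw [if_pos he]
    have h1 : (∫ t : ℝ, t ^ a * Real.exp (-t ^ 2)) =
        ∫ t : ℝ, |t| ^ a * Real.exp (-|t| ^ 2) := by
      refine integral_congr_ae (Filter.Eventually.of_forall fun t => ?_)
      show t ^ a * Real.exp (-t ^ 2) = |t| ^ a * Real.exp (-|t| ^ 2)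
      rw [he.pow_abs, sq_abs]
    rw [h1, integral_comp_abs (f := fun t : ℝ => t ^ a * Real.exp (-t ^ 2)), halfGamma]
    ring
  · rw [if_neg (by simpa using ho)]
    have h := integral_neg_eq_self (fun t : ℝ => t ^ a * Real.exp (-t ^ 2)) volume
    have h2 : (∫ t : ℝ, (-t) ^ a * Real.exp (-(-t) ^ 2)) =
        - ∫ t : ℝ, t ^ a * Real.exp (-t ^ 2) := by
      rw [← integral_neg]
      refine integral_congr_ae (Filter.Eventually.of_forall fun t => ?_)
      show (-t) ^ a * Real.exp (-(-t) ^ 2) = -(t ^ a * Real.exp (-t ^ 2))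
      rw [ho.neg_pow, neg_sq]
      ring
    rw [h2] at h
    linarith

private lemma gauss_prod (n : ℕ) (α : Fin n → ℕ) :
    (∫ x : EuclideanSpace ℝ (Fin n), (∏ i, x i ^ α i) * Real.exp (-‖x‖ ^ 2)) =
      ∏ i, ∫ t : ℝ, t ^ α i * Real.exp (-t ^ 2) := by
  have vp := (EuclideanSpace.volume_preserving_symm_measurableEquiv_toLp (Fin n)).symm
  rw [← vp.integral_comp (MeasurableEquiv.measurableEmbedding _)
      (fun x : EuclideanSpace ℝ (Fin n) => (∏ i, x i ^ α i) * Real.exp (-‖x‖ ^ 2)),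
    ← MeasureTheory.integral_fintype_prod_eq_prod (ι := Fin n)
      (f := fun i (t : ℝ) => t ^ α i * Real.exp (-t ^ 2))]
  refine integral_congr_ae (Filter.Eventually.of_forall fun y => ?_)
  have hcoord : ∀ i, ((MeasurableEquiv.toLp 2 (Fin n → ℝ)).symm.symm y) i = y i :=
    fun i => rfl
  have hnorm : ‖(MeasurableEquiv.toLp 2 (Fin n → ℝ)).symm.symm y‖ ^ 2 = ∑ i, y i ^ 2 := by
    rw [EuclideanSpace.norm_eq, Real.sq_sqrt (by positivity)]
    exact Finset.sum_congr rfl fun i _ => by rw [hcoord, Real.norm_eq_abs, sq_abs]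
  simp_rw [Finset.prod_mul_distrib, hcoord, hnorm, ← Real.exp_sum, ← Finset.sum_neg_distrib]

/-- Theorem 5.1 of the paper (Folland): for the monomial `P(x) = ∏ᵢ xᵢ^{αᵢ}` and
`βᵢ = (αᵢ+1)/2`, the integral of `P` over the closed ball `Bₙ(0;r)` is `0` if
some `αᵢ` is odd, and equals
`(r^{Σαᵢ+n}/(Σαᵢ+n)) · 2(∏ᵢΓ(βᵢ))/Γ(Σᵢβᵢ)` if all `αᵢ` are even. -/
theorem integral_monomial_ball
    (n : ℕ) (hn : 1 ≤ n) (r : ℝ) (hr : 0 < r) (α : Fin n → ℕ) :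
    (∫ x in Metric.closedBall (0 : EuclideanSpace ℝ (Fin n)) r, ∏ i, x i ^ α i)
      = if ∀ i, Even (α i) then
          (r ^ ((∑ i, α i) + n) / (((∑ i, α i : ℕ) : ℝ) + n)) *
            (2 * (∏ i, Real.Gamma (((α i : ℝ) + 1) / 2)) /
              Real.Gamma (∑ i, ((α i : ℝ) + 1) / 2))
        else 0 := by
  set S := ∑ i, α i with hS
  have m1 : n - 1 + S + 1 = S + n := by omega
  have m1R : ((n - 1 + S : ℕ) : ℝ) + 1 = (S : ℝ) + n := by
    rw [show ((S:ℝ) + n) = ((S + n : ℕ) : ℝ) by push_cast; ring, ← m1]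
    push_cast
    ring
  -- the radial integral for the ball
  have hball : (∫ x in Metric.closedBall (0 : EuclideanSpace ℝ (Fin n)) r, ∏ i, x i ^ α i)
      = sphMono n α * (r ^ (S + n) / ((S : ℝ) + n)) := by
    have hm := master n hn α (Set.indicator (Iic r) fun _ => (1:ℝ))
    rw [← hS] at hm
    have hL : (∫ x : EuclideanSpace ℝ (Fin n),
        (∏ i, x i ^ α i) * (Set.indicator (Iic r) fun _ => (1:ℝ)) ‖x‖)
        = ∫ x in Metric.closedBall (0 : EuclideanSpace ℝ (Fin n)) r, ∏ i, x i ^ α i := by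
      rw [← integral_indicator (measurableSet_closedBall)]
      refine integral_congr_ae (Filter.Eventually.of_forall fun x => ?_)
      show (∏ i, x i ^ α i) * (Iic r).indicator (fun _ => (1:ℝ)) ‖x‖
        = (Metric.closedBall (0 : EuclideanSpace ℝ (Fin n)) r).indicator
            (fun x => ∏ i, x i ^ α i) x
      simp only [Set.indicator_apply, mem_Iic, Metric.mem_closedBall,
        dist_zero_right]
      by_cases hx : ‖x‖ ≤ r <;> simp [hx]
    have hR : (∫ t in Ioi (0:ℝ), t ^ (n - 1 + S) *
        (Set.indicator (Iic r) fun _ => (1:ℝ)) t) = r ^ (S + n) / ((S : ℝ) + n) := by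
      have : (∫ t in Ioi (0:ℝ), t ^ (n - 1 + S) *
          (Set.indicator (Iic r) fun _ => (1:ℝ)) t)
          = ∫ t in Ioi (0:ℝ), Set.indicator (Iic r) (fun t => t ^ (n - 1 + S)) t := by
        refine integral_congr_ae (Filter.Eventually.of_forall fun t => ?_)
        show t ^ (n - 1 + S) * (Iic r).indicator (fun _ => (1:ℝ)) t
          = (Iic r).indicator (fun t => t ^ (n - 1 + S)) t
        simp only [Set.indicator_apply, mem_Iic]
        by_cases ht : t ≤ r <;> simp [ht]
      rw [this, setIntegral_indicator measurableSet_Iic, Set.Ioi_inter_Iic,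
        ← intervalIntegral.integral_of_le hr.le, integral_pow, m1]
      rw [zero_pow (by omega), m1R]
      ring
    rw [hL, hR] at hm
    exact hm
  -- the Gaussian integral computes the sphere constant
  have hgauss : (∏ i, ∫ t : ℝ, t ^ α i * Real.exp (-t ^ 2))
      = sphMono n α * ((1/2) * Real.Gamma (((S : ℝ) + n) / 2)) := by
    have hm := master n hn α (fun t => Real.exp (-t ^ 2))
    rw [← hS] at hm
    rw [← gauss_prod n α, hm, halfGamma, m1R]
  have hβ : (∑ i, ((α i : ℝ) + 1) / 2) = ((S : ℝ) + n) / 2 := by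
    rw [← Finset.sum_div, Finset.sum_add_distrib, hS]
    push_cast
    simp [Finset.card_univ]
  have hΓpos : 0 < Real.Gamma (((S : ℝ) + n) / 2) :=
    Real.Gamma_pos_of_pos (by positivity)
  by_cases h : ∀ i, Even (α i)
  · rw [if_pos h]
    have hprod : (∏ i, ∫ t : ℝ, t ^ α i * Real.exp (-t ^ 2))
        = ∏ i, Real.Gamma (((α i : ℝ) + 1) / 2) := by
      refine Finset.prod_congr rfl fun i _ => ?_
      rw [Jval, if_pos (h i)]
    rw [hprod] at hgauss
    have hK : sphMono n α = 2 * (∏ i, Real.Gamma (((α i : ℝ) + 1) / 2)) /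
        Real.Gamma (∑ i, ((α i : ℝ) + 1) / 2) := by
      rw [hβ, eq_div_iff hΓpos.ne']
      linarith [hgauss]
    rw [hball, hK]
    ring
  · rw [if_neg h]
    push_neg at h
    obtain ⟨i, hi⟩ := h
    have hzero : (∏ i, ∫ t : ℝ, t ^ α i * Real.exp (-t ^ 2)) = 0 := by
      refine Finset.prod_eq_zero (Finset.mem_univ i) ?_
      rw [Jval, if_neg hi]
    rw [hzero] at hgauss
    have hK : sphMono n α = 0 := by
      have h2 : (0:ℝ) < (1/2) * Real.Gamma (((S : ℝ) + n) / 2) := by positivity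
      rcases mul_eq_zero.mp hgauss.symm with h | h
      · exact h
      · exact absurd h h2.ne'
    rw [hball, hK, zero_mul]
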